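/- arXiv:1004.1029 — 3 statements merged into one kernel-verified Lean document; each statement's English description precedes it below -/
import Mathlib

section
/- For f continuously differentiable on [0,∞) with f and f' of exponential order, and 0 < α < 1, the Laplace transform of the Caputo derivative ᶜD^α f satisfies L{ᶜD^α f}(s) = s^α L{f}(s) − s^(α−1) f(0), for s sufficiently large. -/
open MeasureTheory Real Set Filter

/-- Caputo fractional derivative of order `α`, for `0 < α < 1`. -/
noncomputable def caputoDeriv (α : ℝ) (f : ℝ → ℝ) (t : ℝ) : ℝ :=
  (1 / Real.Gamma (1 - α)) * ∫ s in (0:ℝ)..t, (t - s) ^ (-α) * deriv f s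

/-- Laplace transform of `f`. -/
noncomputable def laplace (f : ℝ → ℝ) (s : ℝ) : ℝ :=
  ∫ t in Set.Ioi (0:ℝ), Real.exp (-s * t) * f t

theorem measurable_rpow_const' (c : ℝ) : Measurable (fun x : ℝ => x ^ c) := by
  have h : (fun x : ℝ => x ^ c) = fun x => if x = 0 then (if c = 0 then 1 else 0)
      else exp (log x * c) * (if x < 0 then Real.cos (c * π) else 1) := by
    funext x
    rcases lt_trichotomy x 0 with hx | hx | hx
    · rw [Real.rpow_def_of_neg hx, if_neg hx.ne, if_pos hx]
    · subst hx
      by_cases hc : c = 0 <;> simp [hc, Real.zero_rpow, Real.rpow_zero]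
    · rw [Real.rpow_def_of_pos hx, if_neg hx.ne', if_neg (not_lt.mpr hx.le), mul_one]
  rw [h]
  exact Measurable.ite (measurableSet_eq_fun measurable_id measurable_const) measurable_const
    ((Real.measurable_exp.comp (Real.measurable_log.mul_const c)).mul
      (Measurable.ite (measurableSet_lt measurable_id measurable_const)
        measurable_const measurable_const))

theorem expOrderInt {s a M : ℝ} (hs : a < s) {g : ℝ → ℝ}
    (hg : AEStronglyMeasurable g (volume.restrict (Ioi 0)))
    (hbound : ∀ t, 0 ≤ t → |g t| ≤ M * exp (a*t)) :
    IntegrableOn (fun t => exp (-s*t) * g t) (Ioi 0) := by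
  apply Integrable.mono' (g := fun t => M * exp (-(s-a)*t))
  · exact ((exp_neg_integrableOn_Ioi 0 (by linarith : (0:ℝ) < s - a))).const_mul M
  · exact (Continuous.aestronglyMeasurable (by continuity)).mul hg
  · filter_upwards [ae_restrict_mem measurableSet_Ioi] with t ht
    have h1 := hbound t (le_of_lt ht)
    have h2 : ‖exp (-s*t) * g t‖ = exp (-s*t) * |g t| := by
      rw [norm_mul, Real.norm_eq_abs, abs_of_pos (exp_pos _), Real.norm_eq_abs]
    rw [h2]
    calc exp (-s*t) * |g t| ≤ exp (-s*t) * (M * exp (a*t)) :=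
          mul_le_mul_of_nonneg_left h1 (exp_pos _).le
      _ = M * exp (-(s-a)*t) := by rw [mul_left_comm, ← exp_add]; ring_nf

theorem tendstoExp {c : ℝ} (hc : 0 < c) (M : ℝ) :
    Tendsto (fun t : ℝ => M * exp (-c*t)) atTop (nhds 0) := by
  have h1 : Tendsto (fun t : ℝ => -c * t) atTop atBot := by
    simpa [neg_mul, Function.comp] using tendsto_neg_atBot_iff.mpr
      (tendsto_id.const_mul_atTop hc (f := fun t : ℝ => t))
  simpa using (Real.tendsto_exp_atBot.comp h1).const_mul M

theorem ibp {s a M : ℝ} (hs : a < s) {f : ℝ → ℝ}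
    (hf : ContDiffOn ℝ 1 f (Set.Ici 0))
    (hexp : ∀ t : ℝ, 0 ≤ t → |f t| ≤ M * Real.exp (a * t))
    (hexp' : ∀ t : ℝ, 0 ≤ t → |deriv f t| ≤ M * Real.exp (a * t)) :
    ∫ t in Ioi (0:ℝ), exp (-s*t) * deriv f t
      = s * (∫ t in Ioi (0:ℝ), exp (-s*t) * f t) - f 0 := by
  have hfc : ContinuousOn f (Ici 0) := hf.continuousOn
  have hfm : AEStronglyMeasurable f (volume.restrict (Ioi 0)) :=
    (hfc.mono Ioi_subset_Ici_self).aestronglyMeasurable measurableSet_Ioi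
  have hdm : AEStronglyMeasurable (deriv f) (volume.restrict (Ioi 0)) :=
    (measurable_deriv f).aestronglyMeasurable
  have hIf : IntegrableOn (fun t => exp (-s*t) * f t) (Ioi 0) := expOrderInt hs hfm hexp
  have hId : IntegrableOn (fun t => exp (-s*t) * deriv f t) (Ioi 0) := expOrderInt hs hdm hexp'
  set g : ℝ → ℝ := fun t => exp (-s*t) * f t with hgdef
  have hderiv : ∀ t ∈ Ioi (0:ℝ), HasDerivAt g
      (exp (-s*t) * deriv f t - s * (exp (-s*t) * f t)) t := by
    intro t ht
    have hft : HasDerivAt f (deriv f t) t := by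
      have hd : DifferentiableWithinAt ℝ f (Ici 0) t :=
        (hf.differentiableOn one_ne_zero) t (mem_Ici.mpr (le_of_lt (mem_Ioi.mp ht)))
      exact (hd.differentiableAt (Ici_mem_nhds ht)).hasDerivAt
    have he : HasDerivAt (fun t : ℝ => exp (-s*t)) (-s * exp (-s*t)) t := by
      have := (Real.hasDerivAt_exp (-s*t)).comp t ((hasDerivAt_id t).const_mul (-s))
      simpa [Function.comp_def, neg_mul, mul_comm] using this
    have : HasDerivAt (fun y => exp (-s*y) * f y)
        (-s * exp (-s*t) * f t + exp (-s*t) * deriv f t) t := he.mul hft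
    convert this using 1
    ring
  have hcont : ContinuousWithinAt g (Ici 0) 0 :=
    ((Continuous.continuousWithinAt (by continuity)).mul (hfc 0 self_mem_Ici))
  have htend : Tendsto g atTop (nhds 0) := by
    apply squeeze_zero_norm' _ (tendstoExp (by linarith : (0:ℝ) < s - a) M)
    filter_upwards [eventually_ge_atTop (0:ℝ)] with t ht
    have h1 := hexp t ht
    calc ‖g t‖ = exp (-s*t) * |f t| := by
          rw [hgdef, norm_mul, Real.norm_eq_abs, abs_of_pos (exp_pos _), Real.norm_eq_abs]
      _ ≤ exp (-s*t) * (M * exp (a*t)) := mul_le_mul_of_nonneg_left h1 (exp_pos _).le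
      _ = M * exp (-(s-a)*t) := by rw [mul_left_comm, ← exp_add]; ring_nf
  have key := integral_Ioi_of_hasDerivAt_of_tendsto hcont hderiv (hId.sub (hIf.const_mul s)) htend
  have g0 : g 0 = f 0 := by simp [hgdef]
  rw [integral_sub hId (hIf.const_mul s), MeasureTheory.integral_const_mul, g0] at key
  linarith [key]

theorem kernelInt {α s : ℝ} (hα : 0 < α) (hα1 : α < 1) (hs : 0 < s) :
    ∫ v in Ioi (0:ℝ), exp (-s * v) * v ^ (-α) = Real.Gamma (1-α) * s ^ (α - 1) := by
  have h := integral_rpow_mul_exp_neg_mul_Ioi (a := 1 - α) (r := s) (by linarith) hs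
  have h2 : ∀ v : ℝ, v ^ (1 - α - 1) * exp (-(s * v)) = exp (-s * v) * v ^ (-α) := by
    intro v; rw [mul_comm]; ring_nf
  simp_rw [h2] at h
  rw [h, one_div, inv_rpow hs.le, ← rpow_neg hs.le, neg_sub, mul_comm]

theorem shiftIoi (u : ℝ) (g : ℝ → ℝ) : ∫ t in Ioi u, g (t - u) = ∫ v in Ioi (0:ℝ), g v := by
  have h := (measurePreserving_add_right volume u).setIntegral_preimage_emb
    (MeasurableEquiv.addRight u).measurableEmbedding (fun t => g (t - u)) (Ioi u)
  simp only [MeasurableEquiv.coe_addRight, add_sub_cancel_right] at h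
  rw [← h]
  congr 1
  ext x
  simp [MeasurableEquiv.addRight]

theorem laplace_caputo (α : ℝ) (hα : 0 < α) (hα1 : α < 1)
    (f : ℝ → ℝ) (hf : ContDiffOn ℝ 1 f (Set.Ici 0))
    (M a : ℝ) (hM : 0 < M)
    (hexp : ∀ t : ℝ, 0 ≤ t → |f t| ≤ M * Real.exp (a * t))
    (hexp' : ∀ t : ℝ, 0 ≤ t → |deriv f t| ≤ M * Real.exp (a * t)) :
    ∃ s₀ : ℝ, ∀ s : ℝ, s₀ < s →
      laplace (caputoDeriv α f) s = s ^ α * laplace f s - s ^ (α - 1) * f 0 := by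
  refine ⟨|a|, fun s hs => ?_⟩
  have hsa : a < s := lt_of_le_of_lt (le_abs_self a) hs
  have hs0 : 0 < s := lt_of_le_of_lt (abs_nonneg a) hs
  have h1α : 0 < 1 - α := by linarith
  have hΓ : 0 < Real.Gamma (1 - α) := Real.Gamma_pos_of_pos h1α
  set μ : Measure ℝ := volume.restrict (Ioi 0) with hμ
  set F : ℝ → ℝ → ℝ :=
    fun t u => if u < t then exp (-s*t) * ((t-u) ^ (-α) * deriv f u) else 0 with hF
  -- measurability of uncurried F
  have hFm : Measurable (Function.uncurry F) := by
    have h1 : Function.uncurry F = Set.indicator {p : ℝ × ℝ | p.2 < p.1}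
        (fun p => exp (-s*p.1) * ((p.1-p.2) ^ (-α) * deriv f p.2)) := by
      funext p
      simp only [Function.uncurry, hF, Set.indicator_apply, mem_setOf_eq]
    rw [h1]
    refine Measurable.indicator ?_ (measurableSet_lt measurable_snd measurable_fst)
    exact ((Real.measurable_exp.comp (measurable_fst.const_mul (-s))).mul
      (((measurable_rpow_const' (-α)).comp (measurable_fst.sub measurable_snd)).mul
        ((measurable_deriv f).comp measurable_snd)))
  have hFaesm : AEStronglyMeasurable (Function.uncurry F) (μ.prod μ) :=
    hFm.aestronglyMeasurable
  -- bound for deriv f on slices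
  have hdb : ∀ t : ℝ, 0 < t → ∀ u ∈ Ioo 0 t, |deriv f u| ≤ M * exp (|a| * t) := by
    intro t ht u hu
    refine (hexp' u hu.1.le).trans ?_
    have : a * u ≤ |a| * t := by
      calc a * u ≤ |a * u| := le_abs_self _
        _ = |a| * |u| := abs_mul a u
        _ = |a| * u := by rw [abs_of_pos hu.1]
        _ ≤ |a| * t := mul_le_mul_of_nonneg_left hu.2.le (abs_nonneg a)
    exact mul_le_mul_of_nonneg_left (exp_le_exp.mpr this) hM.le
  -- slice function
  set h : ℝ → ℝ → ℝ := fun t u => exp (-s*t) * ((t-u) ^ (-α) * deriv f u) with hh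
  have hFind : ∀ t : ℝ, (fun u => F t u) = (Iio t).indicator (h t) := by
    intro t; funext u
    simp only [hF, hh, Set.indicator_apply, mem_Iio]
  -- integrability of (t-u)^(-α) on Ioo 0 t
  have hker : ∀ t : ℝ, 0 < t → IntegrableOn (fun u => (t-u) ^ (-α)) (Ioo 0 t) := by
    intro t ht
    have h1 : IntervalIntegrable (fun x : ℝ => x ^ (-α)) volume 0 t :=
      intervalIntegral.intervalIntegrable_rpow' (by linarith)
    have h2 := (h1.comp_sub_left t).symm
    simp only [sub_zero, sub_self] at h2
    exact (h2.1).mono_set Ioo_subset_Ioc_self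
  -- slice integrability
  have hslice : ∀ t : ℝ, 0 < t → Integrable (fun u => F t u) μ := by
    intro t ht
    rw [hFind t, hμ, integrable_indicator_iff measurableSet_Iio]
    rw [IntegrableOn, Measure.restrict_restrict measurableSet_Iio, Set.Iio_inter_Ioi]
    apply Integrable.mono' (g := fun u => (exp (-s*t) * (M * exp (|a| * t))) * (t-u) ^ (-α))
    · exact (hker t ht).const_mul _
    · exact (Continuous.aestronglyMeasurable (by continuity)).mul
        ((((measurable_rpow_const' (-α)).comp (measurable_const.sub measurable_id)).mul
          (measurable_deriv f)).aestronglyMeasurable)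
    · filter_upwards [ae_restrict_mem measurableSet_Ioo] with u hu
      have hpos : (0:ℝ) < t - u := by simp only [mem_Ioo] at hu; linarith [hu.2]
      have hrp : (0:ℝ) ≤ (t-u) ^ (-α) := (rpow_pos_of_pos hpos _).le
      calc ‖h t u‖ = exp (-s*t) * ((t-u) ^ (-α) * |deriv f u|) := by
            rw [hh]
            simp only [norm_mul, Real.norm_eq_abs, abs_of_pos (exp_pos _), abs_of_nonneg hrp]
        _ ≤ exp (-s*t) * ((t-u) ^ (-α) * (M * exp (|a| * t))) := by
            have := hdb t ht u hu
            gcongr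
        _ = (exp (-s*t) * (M * exp (|a| * t))) * (t-u) ^ (-α) := by ring
  -- value of ∫ (t-u)^(-α) over Ioo 0 t
  have hkerval : ∀ t : ℝ, 0 < t → ∫ u in Ioo (0:ℝ) t, (t-u) ^ (-α) = t ^ (1-α) / (1-α) := by
    intro t ht
    rw [← integral_Ioc_eq_integral_Ioo, ← intervalIntegral.integral_of_le ht.le,
      intervalIntegral.integral_comp_sub_left (fun x => x ^ (-α)) t, sub_self, sub_zero,
      integral_rpow (Or.inl (by linarith))]
    rw [Real.zero_rpow (by intro hc; nlinarith [hc] : -α + 1 ≠ 0), show -α + 1 = 1 - α by ring]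
    norm_num
  -- integrability of the norm-integral function
  have hnorm : Integrable (fun t => ∫ u, ‖F t u‖ ∂μ) μ := by
    apply Integrable.mono'
      (g := fun t => (M / (1-α)) * (t ^ (1-α) * exp (-(s - |a|) * t)))
    · have := (integrableOn_rpow_mul_exp_neg_mul_rpow (s := 1-α) (p := 1)
        (b := s - |a|) (by linarith) zero_lt_one (by linarith)).const_mul (M / (1-α))
      simpa only [Real.rpow_one] using this
    · exact hFaesm.norm.integral_prod_right'
    · filter_upwards [ae_restrict_mem measurableSet_Ioi] with t ht
      have ht : (0:ℝ) < t := ht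
      have hnn : (0:ℝ) ≤ ∫ u, ‖F t u‖ ∂μ := integral_nonneg (fun u => norm_nonneg _)
      rw [Real.norm_eq_abs, abs_of_nonneg hnn]
      have e1 : ∫ u, ‖F t u‖ ∂μ = ∫ u in Ioo (0:ℝ) t, ‖h t u‖ := by
        have : (fun u => ‖F t u‖) = (Iio t).indicator (fun u => ‖h t u‖) := by
          funext u
          rw [show F t u = (Iio t).indicator (h t) u from congrFun (hFind t) u,
            norm_indicator_eq_indicator_norm]
        rw [hμ, this, setIntegral_indicator measurableSet_Iio, Set.Ioi_inter_Iio]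
      rw [e1]
      have e2 : ∫ u in Ioo (0:ℝ) t, ‖h t u‖
          ≤ ∫ u in Ioo (0:ℝ) t, (exp (-s*t) * (M * exp (|a| * t))) * (t-u) ^ (-α) := by
        apply setIntegral_mono_on
        · have h3 := hslice t ht
          rw [hFind t, hμ, integrable_indicator_iff measurableSet_Iio, IntegrableOn,
            Measure.restrict_restrict measurableSet_Iio, Set.Iio_inter_Ioi] at h3
          exact h3.norm
        · exact (hker t ht).const_mul _
        · exact measurableSet_Ioo
        · intro u hu
          have hpos : (0:ℝ) < t - u := by simp only [mem_Ioo] at hu; linarith [hu.2]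
          have hrp : (0:ℝ) ≤ (t-u) ^ (-α) := (rpow_pos_of_pos hpos _).le
          calc ‖h t u‖ = exp (-s*t) * ((t-u) ^ (-α) * |deriv f u|) := by
                rw [hh]
                simp only [norm_mul, Real.norm_eq_abs, abs_of_pos (exp_pos _), abs_of_nonneg hrp]
            _ ≤ exp (-s*t) * ((t-u) ^ (-α) * (M * exp (|a| * t))) := by
                have := hdb t ht u hu
                gcongr
            _ = (exp (-s*t) * (M * exp (|a| * t))) * (t-u) ^ (-α) := by ring
      refine e2.trans ?_
      rw [MeasureTheory.integral_const_mul, hkerval t ht]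
      have hexpc : exp (-s*t) * exp (|a| * t) = exp (-(s - |a|) * t) := by
        rw [← exp_add]; ring_nf
      apply le_of_eq
      calc exp (-s*t) * (M * exp (|a| * t)) * (t ^ (1-α) / (1-α))
          = (M / (1-α)) * t ^ (1-α) * (exp (-s*t) * exp (|a| * t)) := by ring
        _ = (M / (1-α)) * (t ^ (1-α) * exp (-(s - |a|) * t)) := by rw [hexpc]; ring
  -- product integrability
  have hFint : Integrable (Function.uncurry F) (μ.prod μ) := by
    rw [integrable_prod_iff hFaesm]
    constructor
    · rw [hμ]
      filter_upwards [ae_restrict_mem measurableSet_Ioi] with t ht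
      exact hslice t ht
    · exact hnorm
  -- Fubini
  have hswap : ∫ t, ∫ u, F t u ∂μ ∂μ = ∫ u, ∫ t, F t u ∂μ ∂μ :=
    integral_integral_swap hFint
  -- LHS evaluation
  have hL : ∀ t ∈ Ioi (0:ℝ), ∫ u, F t u ∂μ
      = exp (-s*t) * ∫ u in (0:ℝ)..t, (t-u) ^ (-α) * deriv f u := by
    intro t ht
    rw [hFind t, hμ, setIntegral_indicator measurableSet_Iio, Set.Ioi_inter_Iio,
      ← integral_Ioc_eq_integral_Ioo, ← intervalIntegral.integral_of_le (le_of_lt ht)]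
    rw [← intervalIntegral.integral_const_mul]
  -- RHS evaluation
  have hR : ∀ u ∈ Ioi (0:ℝ), ∫ t, F t u ∂μ
      = (Real.Gamma (1-α) * s ^ (α-1)) * (exp (-s*u) * deriv f u) := by
    intro u hu
    have hind : (fun t => F t u) = (Ioi u).indicator
        (fun t => (exp (-s*t) * (t-u) ^ (-α)) * deriv f u) := by
      funext t
      simp only [hF, Set.indicator_apply, mem_Ioi]
      split_ifs with h1 <;> ring_nf
    rw [hind, hμ, setIntegral_indicator measurableSet_Ioi, Set.Ioi_inter_Ioi,
      sup_eq_right.mpr (le_of_lt hu)]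
    rw [MeasureTheory.integral_mul_const]
    have e3 : ∫ t in Ioi u, exp (-s*t) * (t-u) ^ (-α)
        = ∫ t in Ioi u, (fun v => exp (-s*(v+u)) * v ^ (-α)) (t - u) := by
      apply setIntegral_congr_fun measurableSet_Ioi
      intro t _
      simp only [sub_add_cancel]
    rw [e3, shiftIoi u (fun v => exp (-s*(v+u)) * v ^ (-α))]
    have e4 : ∀ v : ℝ, exp (-s*(v+u)) * v ^ (-α) = exp (-s*u) * (exp (-s*v) * v ^ (-α)) := by
      intro v
      rw [← mul_assoc, ← exp_add]
      ring_nf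
    simp_rw [e4]
    rw [MeasureTheory.integral_const_mul, kernelInt hα hα1 hs0]
    ring
  -- assemble
  have hleft : laplace (caputoDeriv α f) s = (1 / Real.Gamma (1-α)) * ∫ t, ∫ u, F t u ∂μ ∂μ := by
    rw [laplace]
    have : ∀ t ∈ Ioi (0:ℝ), exp (-s*t) * caputoDeriv α f t
        = (1 / Real.Gamma (1-α)) * ∫ u, F t u ∂μ := by
      intro t ht
      rw [caputoDeriv, hL t ht]
      ring
    rw [setIntegral_congr_fun measurableSet_Ioi this, ← hμ, MeasureTheory.integral_const_mul]
  have hright : ∫ u, ∫ t, F t u ∂μ ∂μ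
      = (Real.Gamma (1-α) * s ^ (α-1)) * (s * laplace f s - f 0) := by
    rw [hμ, setIntegral_congr_fun measurableSet_Ioi hR, MeasureTheory.integral_const_mul, ← hμ]
    congr 1
    rw [← hμ] at *
    have := ibp hsa hf hexp hexp'
    rw [laplace]
    rw [hμ]
    exact this
  rw [hleft, hswap, hright]
  have hsα : s ^ (α - 1) * s = s ^ α := by
    rw [← Real.rpow_add_one hs0.ne' (α-1), sub_add_cancel]
  have hsimp : (1 / Real.Gamma (1-α)) * ((Real.Gamma (1-α) * s ^ (α-1)) * (s * laplace f s - f 0))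
      = s ^ (α-1) * (s * laplace f s - f 0) := by
    field_simp
  rw [hsimp, ← hsα]
  ring
end

section
/- For 0 < α < 1 and λ ∈ ℝ, the Caputo fractional derivative of the Mittag-Leffler function t ↦ E_α(λ t^α) equals λ E_α(λ t^α) for t > 0, where E_α(z) = Σ_{k≥0} z^k / Γ(αk + 1). -/
open MeasureTheory Real

/-- The (one-parameter) Mittag-Leffler function `E_α(z) = ∑ zᵏ / Γ(αk+1)`. -/
noncomputable def mittagLeffler (α : ℝ) (z : ℝ) : ℝ :=
  ∑' k : ℕ, z ^ k / Real.Gamma (α * k + 1)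


lemma gamma_lb {α : ℝ} (hα : 0 < α) (hα1 : α < 1) {z : ℝ} (hz : 2 ≤ z) :
    z * Real.Gamma z ≤ (z + α) ^ (1 - α) * Real.Gamma (z + α) := by
  have hz0 : (0:ℝ) < z := by linarith
  have hzα : (0:ℝ) < z + α := by linarith
  have hc := Real.convexOn_log_Gamma.2 (Set.mem_Ioi.mpr hzα)
    (Set.mem_Ioi.mpr (by linarith : (0:ℝ) < z + α + 1)) hα.le (by linarith : (0:ℝ) ≤ 1 - α)
    (by ring)
  have hpt : α • (z + α) + (1 - α) • (z + α + 1) = z + 1 := by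
    simp only [smul_eq_mul]; ring
  rw [hpt] at hc
  simp only [Function.comp, smul_eq_mul] at hc
  rw [Real.Gamma_add_one hzα.ne', Real.log_mul hzα.ne'
    (Real.Gamma_pos_of_pos hzα).ne'] at hc
  have hc' : Real.log (Real.Gamma (z + 1)) ≤
      Real.log (Real.Gamma (z + α)) + (1 - α) * Real.log (z + α) := by nlinarith
  have h1 : z * Real.Gamma z = Real.Gamma (z + 1) := (Real.Gamma_add_one hz0.ne').symm
  rw [h1]
  have h2 : Real.Gamma (z + 1) = Real.exp (Real.log (Real.Gamma (z + 1))) :=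
    (Real.exp_log (Real.Gamma_pos_of_pos (by linarith))).symm
  rw [h2]
  calc Real.exp (Real.log (Real.Gamma (z + 1)))
      ≤ Real.exp (Real.log (Real.Gamma (z + α)) + (1 - α) * Real.log (z + α)) :=
        Real.exp_le_exp.mpr hc'
    _ = (z + α) ^ (1 - α) * Real.Gamma (z + α) := by
        rw [Real.exp_add, Real.exp_log (Real.Gamma_pos_of_pos hzα),
          Real.rpow_def_of_pos hzα]
        ring_nf

lemma summable_ml {α : ℝ} (hα : 0 < α) (hα1 : α < 1) (β : ℝ) {x : ℝ} (hx : 0 ≤ x) :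
    Summable (fun k : ℕ => x ^ k / Real.Gamma (α * k + β)) := by
  apply summable_of_ratio_norm_eventually_le (r := 1/2) (by norm_num)
  set m : ℝ := max 2 (max 1 ((4 * x) ^ α⁻¹)) with hm
  have htend : Filter.Tendsto (fun k : ℕ => α * k + β) Filter.atTop Filter.atTop := by
    apply Filter.tendsto_atTop_add_const_right
    exact (tendsto_natCast_atTop_atTop).const_mul_atTop hα
  filter_upwards [htend.eventually_ge_atTop m] with k hk
  set z : ℝ := α * k + β with hzdef
  have hz2 : (2:ℝ) ≤ z := le_trans (le_max_left _ _) hk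
  have hz0 : (0:ℝ) < z := by linarith
  have hzα : (0:ℝ) < z + α := by linarith
  -- z ^ α ≥ 4x
  have hz4x : 4 * x ≤ z ^ α := by
    have h1 : (4 * x) ^ α⁻¹ ≤ z := le_trans (le_trans (le_max_right _ _) (le_max_right _ _)) hk
    have h4x : (0:ℝ) ≤ 4 * x := by linarith
    calc 4 * x = ((4 * x) ^ α⁻¹) ^ α := (Real.rpow_inv_rpow h4x hα.ne').symm
      _ ≤ z ^ α := Real.rpow_le_rpow (Real.rpow_nonneg h4x _) h1 hα.le
  -- key: Gamma (z + α) ≥ 2 x * Gamma z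
  have hkey : 2 * x * Real.Gamma z ≤ Real.Gamma (z + α) := by
    have h1 := gamma_lb hα hα1 hz2
    have h2 : (z + α) ^ (1 - α) ≤ 2 * z ^ (1 - α) := by
      calc (z + α) ^ (1 - α) ≤ (2 * z) ^ (1 - α) :=
            Real.rpow_le_rpow hzα.le (by linarith) (by linarith)
        _ = 2 ^ (1 - α) * z ^ (1 - α) := Real.mul_rpow (by norm_num) hz0.le
        _ ≤ 2 * z ^ (1 - α) := by
            have : (2:ℝ) ^ (1 - α) ≤ 2 ^ (1:ℝ) :=
              Real.rpow_le_rpow_of_exponent_le (by norm_num) (by linarith)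
            rw [Real.rpow_one] at this
            have := Real.rpow_nonneg hz0.le (1 - α)
            nlinarith
    have hG : (0:ℝ) < Real.Gamma (z + α) := Real.Gamma_pos_of_pos hzα
    have hz1 : z = z ^ α * z ^ (1 - α) := by
      rw [← Real.rpow_add hz0]; norm_num
    have hGz : (0:ℝ) < Real.Gamma z := Real.Gamma_pos_of_pos hz0
    -- z * Γ z ≤ (z+α)^(1-α) Γ(z+α) ≤ 2 z^(1-α) Γ(z+α)
    have h3 : z * Real.Gamma z ≤ 2 * z ^ (1 - α) * Real.Gamma (z + α) := by
      calc z * Real.Gamma z ≤ (z + α) ^ (1 - α) * Real.Gamma (z + α) := h1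
        _ ≤ 2 * z ^ (1 - α) * Real.Gamma (z + α) := by nlinarith
    have hz1α : (0:ℝ) < z ^ (1 - α) := Real.rpow_pos_of_pos hz0 _
    have h4 : z ^ α * Real.Gamma z ≤ 2 * Real.Gamma (z + α) := by
      have h5 : z ^ α * Real.Gamma z * z ^ (1 - α) ≤ 2 * Real.Gamma (z + α) * z ^ (1 - α) := by
        have hz1' : z ^ α * z ^ (1 - α) = z := by rw [← Real.rpow_add hz0]; norm_num
        calc z ^ α * Real.Gamma z * z ^ (1 - α) = z ^ α * z ^ (1 - α) * Real.Gamma z := by ring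
          _ = z * Real.Gamma z := by rw [hz1']
          _ ≤ 2 * z ^ (1 - α) * Real.Gamma (z + α) := h3
          _ = 2 * Real.Gamma (z + α) * z ^ (1 - α) := by ring
      exact le_of_mul_le_mul_right h5 hz1α
    nlinarith [mul_le_mul_of_nonneg_right hz4x hGz.le]
  -- final ratio inequality
  have hnext : α * ((k:ℝ) + 1) + β = z + α := by push_cast [hzdef]; ring
  rw [norm_div, norm_div, norm_pow, norm_pow]
  push_cast [hnext]
  have hGz : (0:ℝ) < Real.Gamma z := Real.Gamma_pos_of_pos hz0
  have hGzα : (0:ℝ) < Real.Gamma (z + α) := Real.Gamma_pos_of_pos hzα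
  rw [Real.norm_of_nonneg hGz.le, Real.norm_of_nonneg hGzα.le, Real.norm_of_nonneg hx]
  have hxk : (0:ℝ) ≤ x ^ k := pow_nonneg hx k
  have goal' : x ^ (k + 1) / Real.Gamma (z + α) ≤ (x ^ k / 2) / Real.Gamma z := by
    rw [div_le_div_iff₀ hGzα hGz]
    nlinarith [mul_le_mul_of_nonneg_left hkey hxk, pow_succ x k]
  refine le_trans goal' (le_of_eq (by ring))


lemma betaIntegrableOn {α p t : ℝ} (hα : 0 < α) (hα1 : α < 1) (hp : 0 < p) (ht : 0 < t) :
    IntegrableOn (fun s : ℝ => s ^ (p - 1) * (t - s) ^ (-α)) (Set.Ioc 0 t) := by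
  have hsplit : Set.Ioc (0:ℝ) t = Set.Ioc 0 (t/2) ∪ Set.Ioc (t/2) t := by
    rw [Set.Ioc_union_Ioc_eq_Ioc (by linarith) (by linarith)]
  rw [hsplit]
  apply IntegrableOn.union
  · -- near 0 : bound by (t/2)^(-α) * s^(p-1)
    have hdom : IntegrableOn (fun s : ℝ => (t/2) ^ (-α) * s ^ (p - 1)) (Set.Ioc 0 (t/2)) := by
      apply Integrable.const_mul
      have h := intervalIntegral.intervalIntegrable_rpow' (a := 0) (b := t/2)
        (r := p - 1) (by linarith)
      rw [intervalIntegrable_iff_integrableOn_Ioc_of_le (by linarith)] at h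
      exact h
    have hcont : ContinuousOn (fun s : ℝ => s ^ (p - 1) * (t - s) ^ (-α)) (Set.Ioc 0 (t/2)) := by
      apply ContinuousOn.mul
      · exact continuousOn_id.rpow_const (fun x hx => Or.inl hx.1.ne')
      · exact (continuousOn_const.sub continuousOn_id).rpow_const
          (fun x hx => Or.inl (by show t - x ≠ 0; intro h; linarith [hx.2]))
    apply Integrable.mono hdom (hcont.aestronglyMeasurable measurableSet_Ioc)
    filter_upwards [ae_restrict_mem measurableSet_Ioc] with s hs
    have hs0 : 0 < s := hs.1
    have hst : s ≤ t/2 := hs.2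
    have h1 : (0:ℝ) < t - s := by linarith
    rw [Real.norm_of_nonneg (by positivity), Real.norm_of_nonneg (by positivity)]
    have h2 : (t - s) ^ (-α) ≤ (t/2) ^ (-α) :=
      Real.rpow_le_rpow_of_nonpos (by linarith) (by linarith) (by linarith)
    have h3 : (0:ℝ) ≤ s ^ (p - 1) := Real.rpow_nonneg hs0.le _
    nlinarith
  · -- near t : bound by C * (t-s)^(-α)
    rw [integrableOn_Ioc_iff_integrableOn_Ioo]
    set C : ℝ := (t / 2) ^ (p - 1) + t ^ (p - 1) with hC
    have hdom : IntegrableOn (fun s : ℝ => C * (t - s) ^ (-α)) (Set.Ioo (t/2) t) := by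
      apply Integrable.const_mul
      have h := intervalIntegral.intervalIntegrable_rpow' (a := 0) (b := t/2)
        (r := -α) (by linarith)
      have h2 := h.comp_sub_left t
      rw [intervalIntegrable_iff] at h2
      apply h2.mono_set
      rw [Set.uIoc_comm, Set.uIoc_of_le (by linarith)]
      exact fun x hx => ⟨by linarith [hx.1], by linarith [hx.2]⟩
    have hcont : ContinuousOn (fun s : ℝ => s ^ (p - 1) * (t - s) ^ (-α)) (Set.Ioo (t/2) t) := by
      apply ContinuousOn.mul
      · exact continuousOn_id.rpow_const
          (fun x hx => Or.inl (by simp only [id]; intro h; simp [h] at hx; linarith [hx.1]))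
      · exact (continuousOn_const.sub continuousOn_id).rpow_const
          (fun x hx => Or.inl (by show t - x ≠ 0; intro h; nlinarith [hx.2, sub_eq_zero.mp h]))
    apply Integrable.mono hdom (hcont.aestronglyMeasurable measurableSet_Ioo)
    filter_upwards [ae_restrict_mem measurableSet_Ioo] with s hs
    have hs0 : 0 < s := lt_of_le_of_lt (by linarith) hs.1
    have hst : s < t := hs.2
    have h1 : (0:ℝ) ≤ t - s := by linarith
    rw [Real.norm_of_nonneg (by positivity), Real.norm_of_nonneg (by positivity)]
    have h2 : s ^ (p - 1) ≤ C := by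
      rcases le_or_gt 0 (p - 1) with hp1 | hp1
      · have h5 : (0:ℝ) ≤ (t/2) ^ (p-1) := Real.rpow_nonneg (by linarith) _
        have h6 : s ^ (p - 1) ≤ t ^ (p - 1) := Real.rpow_le_rpow hs0.le hst.le hp1
        rw [hC]; linarith
      · have h5 : s ^ (p - 1) ≤ (t/2) ^ (p - 1) :=
          Real.rpow_le_rpow_of_nonpos (by linarith) hs.1.le (by linarith)
        have h6 : (0:ℝ) ≤ t ^ (p-1) := Real.rpow_nonneg (by linarith) _
        rw [hC]; linarith
    have h3 : (0:ℝ) ≤ (t - s) ^ (-α) := Real.rpow_nonneg h1 _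
    nlinarith

lemma betaValue {α p t : ℝ} (hα : 0 < α) (hα1 : α < 1) (hp : 0 < p) (ht : 0 < t) :
    ∫ s in (0:ℝ)..t, s ^ (p - 1) * (t - s) ^ (-α) =
      t ^ (p - α) * (Real.Gamma p * Real.Gamma (1 - α) / Real.Gamma (p + 1 - α)) := by
  have h1α : (0:ℝ) < 1 - α := by linarith
  have hscaled := Complex.betaIntegral_scaled (p : ℂ) ((1 - α : ℝ) : ℂ) ht
  have hGG := Complex.Gamma_mul_Gamma_eq_betaIntegral
    (by simpa using hp : 0 < (p:ℂ).re) (by simpa using h1α : 0 < ((1-α:ℝ):ℂ).re)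
  have hre : (∫ x in (0:ℝ)..t, (x:ℂ) ^ ((p:ℂ) - 1) * ((t:ℂ) - x) ^ (((1-α:ℝ):ℂ) - 1)) =
      ((∫ s in (0:ℝ)..t, s ^ (p - 1) * (t - s) ^ (-α) : ℝ) : ℂ) := by
    rw [← intervalIntegral.integral_ofReal]
    rw [intervalIntegral.integral_of_le ht.le, intervalIntegral.integral_of_le ht.le]
    apply setIntegral_congr_fun measurableSet_Ioc
    intro x hx
    have hx0 : (0:ℝ) ≤ x := hx.1.le
    have htx : (0:ℝ) ≤ t - x := by linarith [hx.2]
    have e1 : ((x ^ (p - 1) : ℝ) : ℂ) = (x:ℂ) ^ ((p:ℂ) - 1) := by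
      rw [Complex.ofReal_cpow hx0]; congr 1; push_cast; ring
    have e2 : (((t - x) ^ (-α) : ℝ) : ℂ) = ((t:ℂ) - x) ^ (((1-α:ℝ):ℂ) - 1) := by
      rw [Complex.ofReal_cpow htx]; rw [Complex.ofReal_sub]; congr 1; push_cast; ring
    show (x:ℂ) ^ ((p:ℂ) - 1) * ((t:ℂ) - x) ^ (((1-α:ℝ):ℂ) - 1) =
      ((x ^ (p - 1) * (t - x) ^ (-α) : ℝ) : ℂ)
    rw [Complex.ofReal_mul, e1, e2]
  rw [hre] at hscaled
  have hG0 : Complex.Gamma ((p:ℂ) + ((1-α:ℝ):ℂ)) ≠ 0 := by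
    have h : (p:ℂ) + ((1-α:ℝ):ℂ) = ((p + (1-α) : ℝ) : ℂ) := by push_cast; ring
    rw [h, Complex.Gamma_ofReal]
    exact_mod_cast (Real.Gamma_pos_of_pos (by linarith : (0:ℝ) < p + (1 - α))).ne'
  have hbeta : Complex.betaIntegral (p:ℂ) ((1-α:ℝ):ℂ) =
      ((Real.Gamma p * Real.Gamma (1-α) / Real.Gamma (p + 1 - α) : ℝ) : ℂ) := by
    have h2 : Complex.betaIntegral (p:ℂ) ((1-α:ℝ):ℂ) =
        Complex.Gamma (p:ℂ) * Complex.Gamma ((1-α:ℝ):ℂ) /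
          Complex.Gamma ((p:ℂ) + ((1-α:ℝ):ℂ)) := by
      rw [hGG]
      exact (mul_div_cancel_left₀ _ hG0).symm
    rw [h2]
    have h : (p:ℂ) + ((1-α:ℝ):ℂ) = ((p + 1 - α : ℝ) : ℂ) := by push_cast; ring
    rw [h, Complex.Gamma_ofReal, Complex.Gamma_ofReal, Complex.Gamma_ofReal]
    push_cast
    ring
  apply Complex.ofReal_injective
  rw [hscaled, hbeta]
  rw [show (p:ℂ) + ((1-α:ℝ):ℂ) - 1 = (((p - α : ℝ)):ℂ) from by push_cast; ring]
  rw [← Complex.ofReal_cpow ht.le]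
  push_cast
  ring

lemma ml_hasDerivAt {α lam : ℝ} (hα : 0 < α) (hα1 : α < 1) {s : ℝ} (hs : 0 < s) :
    HasDerivAt (fun u => mittagLeffler α (lam * u ^ α))
      (∑' k : ℕ, lam ^ k * (α * k * s ^ (α * k - 1)) / Real.Gamma (α * k + 1)) s := by
  set g : ℕ → ℝ → ℝ := fun k u => lam ^ k * u ^ (α * k) / Real.Gamma (α * k + 1) with hg
  set g' : ℕ → ℝ → ℝ := fun k u => lam ^ k * (α * k * u ^ (α * k - 1)) / Real.Gamma (α * k + 1)
    with hg'
  set T : Set ℝ := Set.Ioo (s/2) (2*s) with hT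
  set u : ℕ → ℝ := fun k => (|lam| * (2*s) ^ α) ^ k / ((s/2) * Real.Gamma (α * k)) with hu
  have hsummu : Summable u := by
    have h := (summable_ml hα hα1 0 (x := |lam| * (2*s) ^ α)
      (by positivity)).div_const (s/2)
    apply h.congr
    intro k
    rw [add_zero]
    rw [div_div, mul_comm (Real.Gamma (α * k)) (s/2)]
  have hderiv : ∀ k : ℕ, ∀ y ∈ T, HasDerivAt (g k) (g' k y) y := by
    intro k y hy
    have hy0 : y ≠ 0 := (lt_trans (by linarith) hy.1).ne'
    have h := ((Real.hasDerivAt_rpow_const (x := y) (p := α * k)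
      (Or.inl hy0)).const_mul (lam ^ k)).div_const (Real.Gamma (α * k + 1))
    convert h using 1
  have hbound : ∀ k : ℕ, ∀ y ∈ T, ‖g' k y‖ ≤ u k := by
    intro k y hy
    have hy0 : 0 < y := lt_trans (by linarith) hy.1
    rcases Nat.eq_zero_or_pos k with hk | hk
    · subst hk
      simp only [hg', hu]
      norm_num [Real.Gamma_zero]
    · have hαk : (0:ℝ) < α * k := by positivity
      have hΓ : Real.Gamma (α * k + 1) = α * k * Real.Gamma (α * k) :=
        Real.Gamma_add_one hαk.ne'
      have hΓpos : 0 < Real.Gamma (α * k) := Real.Gamma_pos_of_pos hαk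
      have hnorm : ‖g' k y‖ = |lam| ^ k * (α * k * y ^ (α * k - 1)) /
          Real.Gamma (α * k + 1) := by
        simp only [hg']
        rw [Real.norm_eq_abs, abs_div, abs_mul, abs_pow]
        rw [abs_of_nonneg (by positivity : (0:ℝ) ≤ α * k * y ^ (α * k - 1)),
          abs_of_nonneg (Real.Gamma_pos_of_pos (by positivity) : (0:ℝ) < _).le]
      rw [hnorm, hΓ]
      have hyb : y ^ (α * k - 1) ≤ (2*s) ^ (α * k) / (s/2) := by
        have h1 : y ^ (α * k - 1) = y ^ (α * k) / y := by
          rw [← Real.rpow_sub_one hy0.ne']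
        rw [h1]
        exact div_le_div₀ (by positivity)
          (Real.rpow_le_rpow hy0.le (le_of_lt hy.2) (by positivity))
          (by positivity) (by linarith [hy.1])
      have hpow : (|lam| * (2*s) ^ α) ^ k = |lam| ^ k * (2*s) ^ (α * k) := by
        rw [mul_pow, ← Real.rpow_natCast ((2*s) ^ α) k, ← Real.rpow_mul (by linarith)]
      rw [hu]
      simp only
      rw [hpow]
      rw [div_le_div_iff₀ (by positivity) (by positivity)]
      calc |lam| ^ k * (α * ↑k * y ^ (α * ↑k - 1)) * (s / 2 * Real.Gamma (α * ↑k))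
          ≤ |lam| ^ k * (α * ↑k * ((2*s) ^ (α * k) / (s/2))) * (s / 2 * Real.Gamma (α * ↑k)) := by
            apply mul_le_mul_of_nonneg_right _ (by positivity)
            apply mul_le_mul_of_nonneg_left _ (by positivity)
            exact mul_le_mul_of_nonneg_left hyb (by positivity)
        _ = |lam| ^ k * (2*s) ^ (α * ↑k) * (α * ↑k * Real.Gamma (α * ↑k)) := by
            field_simp
  have hsum0 : Summable (fun k => g k s) := by
    apply Summable.of_norm_bounded
      (summable_ml hα hα1 1 (x := |lam| * s ^ α) (by positivity))
    intro k
    simp only [hg, norm_div, norm_mul, norm_pow]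
    rw [Real.norm_of_nonneg (Real.rpow_nonneg hs.le _),
      Real.norm_of_nonneg (Real.Gamma_pos_of_pos (by positivity : (0:ℝ) < α * k + 1)).le]
    apply le_of_eq
    congr 1
    rw [Real.norm_eq_abs, mul_pow, ← Real.rpow_natCast (s ^ α) k, ← Real.rpow_mul hs.le]
  have hmem : s ∈ T := ⟨by linarith, by linarith⟩
  have hder := hasDerivAt_tsum_of_isPreconnected hsummu isOpen_Ioo
    ((convex_Ioo _ _).isPreconnected) hderiv hbound hmem hsum0 hmem
  apply hder.congr_of_eventuallyEq
  filter_upwards [IsOpen.mem_nhds isOpen_Ioi (Set.mem_Ioi.mpr hs)] with y hy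
  show mittagLeffler α (lam * y ^ α) = ∑' k, g k y
  unfold mittagLeffler
  apply tsum_congr
  intro k
  congr 1
  rw [mul_pow, ← Real.rpow_natCast (y ^ α) k, ← Real.rpow_mul (le_of_lt hy)]

theorem caputo_mittagLeffler (α lam : ℝ) (hα : 0 < α) (hα1 : α < 1) :
    ∀ t : ℝ, 0 < t →
      caputoDeriv α (fun u => mittagLeffler α (lam * u ^ α)) t =
        lam * mittagLeffler α (lam * t ^ α) := by
  intro t ht
  have hΓα : 0 < Real.Gamma (1 - α) := Real.Gamma_pos_of_pos (by linarith)
  set F : ℕ → ℝ → ℝ := fun k s =>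
    (t - s) ^ (-α) * (lam ^ k * (α * k * s ^ (α * k - 1)) / Real.Gamma (α * k + 1)) with hF
  -- Step 1: replace deriv by the series
  have hstep1 : (∫ s in (0:ℝ)..t,
        (t - s) ^ (-α) * deriv (fun u => mittagLeffler α (lam * u ^ α)) s)
      = ∫ s in Set.Ioc (0:ℝ) t, (∑' k : ℕ, F k s) := by
    rw [intervalIntegral.integral_of_le ht.le]
    apply setIntegral_congr_fun measurableSet_Ioc
    intro s hs
    simp only [hF]
    rw [(ml_hasDerivAt hα hα1 hs.1).deriv]
    exact tsum_mul_left.symm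
  -- pointwise form of F k for k ≠ 0
  have hFeq : ∀ k : ℕ, F k = fun s => (lam ^ k * (α * k) / Real.Gamma (α * k + 1)) *
      (s ^ (α * k - 1) * (t - s) ^ (-α)) := by
    intro k; funext s; simp only [hF]; ring
  have hF0 : F 0 = fun _ => (0:ℝ) := by
    funext s; simp [hF]
  have hcast : ∀ k : ℕ, k ≠ 0 → (0:ℝ) < α * k := by
    intro k hk
    have : (0:ℝ) < (k:ℝ) := by exact_mod_cast Nat.pos_of_ne_zero hk
    positivity
  -- integrability
  have hFint : ∀ k : ℕ, IntegrableOn (F k) (Set.Ioc 0 t) := by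
    intro k
    rcases eq_or_ne k 0 with hk | hk
    · rw [hk, hF0]; exact integrableOn_const measure_Ioc_lt_top.ne
    · rw [hFeq k]
      exact (betaIntegrableOn hα hα1 (hcast k hk) ht).const_mul _
  -- beta integral value over Ioc
  have hbetaint : ∀ k : ℕ, k ≠ 0 → ∫ s in Set.Ioc (0:ℝ) t, s ^ (α * k - 1) * (t - s) ^ (-α) =
      t ^ (α * k - α) * (Real.Gamma (α * k) * Real.Gamma (1 - α) / Real.Gamma (α * k + 1 - α)) := by
    intro k hk
    rw [← intervalIntegral.integral_of_le ht.le]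
    exact betaValue hα hα1 (hcast k hk) ht
  -- norm integrals are bounded by a summable sequence
  have hnorm_eq : ∀ k : ℕ, k ≠ 0 → (fun s => ‖F k s‖) =ᵐ[volume.restrict (Set.Ioc (0:ℝ) t)]
      fun s => (|lam| ^ k * (α * k) / Real.Gamma (α * k + 1)) *
        (s ^ (α * k - 1) * (t - s) ^ (-α)) := by
    intro k hk
    filter_upwards [ae_restrict_mem measurableSet_Ioc] with s hs
    have hs0 : 0 < s := hs.1
    have hts : (0:ℝ) ≤ t - s := by linarith [hs.2]
    have hΓ : (0:ℝ) < Real.Gamma (α * k + 1) := Real.Gamma_pos_of_pos (by positivity)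
    simp only [hF]
    rw [Real.norm_eq_abs, abs_mul, abs_div, abs_mul, abs_pow,
      abs_of_nonneg (Real.rpow_nonneg hts _),
      abs_of_nonneg (by positivity : (0:ℝ) ≤ α * k * s ^ (α * k - 1)),
      abs_of_nonneg hΓ.le]
    ring
  have hnormint : ∀ k : ℕ, k ≠ 0 → ∫ s in Set.Ioc (0:ℝ) t, ‖F k s‖ =
      |lam| ^ k * (α * k) / Real.Gamma (α * k + 1) *
        (t ^ (α * k - α) * (Real.Gamma (α * k) * Real.Gamma (1 - α) /
          Real.Gamma (α * k + 1 - α))) := by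
    intro k hk
    rw [integral_congr_ae (hnorm_eq k hk), integral_const_mul, hbetaint k hk]
  have hnormsum : Summable (fun k : ℕ => ∫ s in Set.Ioc (0:ℝ) t, ‖F k s‖) := by
    refine Summable.of_nonneg_of_le (f := fun k : ℕ => (Real.Gamma (1 - α) * t ^ (-α)) *
        ((|lam| * t ^ α) ^ k / Real.Gamma (α * k + (1 - α))))
      (fun k => integral_nonneg fun s => norm_nonneg _) ?_
      ((summable_ml hα hα1 (1 - α) (x := |lam| * t ^ α) (by positivity)).mul_left _)
    · intro k
      rcases eq_or_ne k 0 with hk | hk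
      · rw [hk, hF0]
        simp only [norm_zero]
        rw [integral_zero]
        have h9 : (0:ℝ) < Real.Gamma (α * ((0:ℕ):ℝ) + (1 - α)) :=
          Real.Gamma_pos_of_pos (by push_cast; linarith)
        have h8 : (0:ℝ) ≤ t ^ (-α) := Real.rpow_nonneg ht.le _
        exact mul_nonneg (mul_nonneg hΓα.le h8) (div_nonneg (by positivity) h9.le)
      · rw [hnormint k hk]
        apply le_of_eq
        show _ = Real.Gamma (1 - α) * t ^ (-α) *
          ((|lam| * t ^ α) ^ k / Real.Gamma (α * k + (1 - α)))
        have hαk := hcast k hk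
        have hΓ : Real.Gamma (α * k + 1) = α * k * Real.Gamma (α * k) :=
          Real.Gamma_add_one hαk.ne'
        have hΓk : (0:ℝ) < Real.Gamma (α * k) := Real.Gamma_pos_of_pos hαk
        have hpow : (|lam| * t ^ α) ^ k = |lam| ^ k * t ^ (α * k) := by
          rw [mul_pow, ← Real.rpow_natCast (t ^ α) k, ← Real.rpow_mul ht.le]
        have htk : t ^ (α * k - α) = t ^ (α * k) * t ^ (-α) := by
          rw [← Real.rpow_add ht]; ring_nf
        have harg : α * k + (1 - α) = α * k + 1 - α := by ring
        have hcancel : |lam| ^ k * (α * ↑k) / (α * ↑k * Real.Gamma (α * ↑k)) =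
            |lam| ^ k / Real.Gamma (α * ↑k) := by
          rw [mul_comm (|lam| ^ k) (α * ↑k), mul_div_mul_left _ _ hαk.ne']
        rw [hΓ, hcancel, hpow, htk, harg]
        have hone : Real.Gamma (α * ↑k) * (Real.Gamma (α * ↑k))⁻¹ = 1 :=
          mul_inv_cancel₀ hΓk.ne'
        linear_combination (|lam| ^ k * t ^ (α * ↑k) * t ^ (-α) * Real.Gamma (1 - α) /
          Real.Gamma (α * ↑k + 1 - α)) * hone
  -- interchange
  have hinter : ∫ s in Set.Ioc (0:ℝ) t, (∑' k : ℕ, F k s) =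
      ∑' k : ℕ, ∫ s in Set.Ioc (0:ℝ) t, F k s :=
    (integral_tsum_of_summable_integral_norm hFint hnormsum).symm
  have hIsum : Summable (fun k : ℕ => ∫ s in Set.Ioc (0:ℝ) t, F k s) :=
    Summable.of_norm_bounded hnormsum (fun k => norm_integral_le_integral_norm _)
  have hI0 : ∫ s in Set.Ioc (0:ℝ) t, F 0 s = 0 := by rw [hF0]; simp
  have hIval : ∀ k : ℕ, k ≠ 0 → ∫ s in Set.Ioc (0:ℝ) t, F k s =
      lam ^ k * (α * k) / Real.Gamma (α * k + 1) *
        (t ^ (α * k - α) * (Real.Gamma (α * k) * Real.Gamma (1 - α) /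
          Real.Gamma (α * k + 1 - α))) := by
    intro k hk
    rw [hFeq k, integral_const_mul, hbetaint k hk]
  -- final computation
  unfold caputoDeriv
  rw [hstep1, hinter, ← tsum_mul_left, Summable.tsum_eq_zero_add (hIsum.mul_left _), hI0, mul_zero,
    zero_add]
  have hmlt : mittagLeffler α (lam * t ^ α) = ∑' k : ℕ, (lam * t ^ α) ^ k /
      Real.Gamma (α * k + 1) := rfl
  rw [hmlt, ← tsum_mul_left]
  apply tsum_congr
  intro k
  rw [hIval (k + 1) (Nat.succ_ne_zero k)]
  have hαk1 : (0:ℝ) < α * ((k:ℝ) + 1) := by positivity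
  have e0 : (((k + 1 : ℕ)):ℝ) = (k:ℝ) + 1 := by push_cast; ring
  have hΓ : Real.Gamma (α * ((k:ℝ) + 1) + 1) = α * ((k:ℝ) + 1) *
      Real.Gamma (α * ((k:ℝ) + 1)) := Real.Gamma_add_one hαk1.ne'
  have e1 : α * (((k + 1 : ℕ)):ℝ) + 1 - α = α * k + 1 := by push_cast; ring
  have e2 : t ^ (α * (((k + 1 : ℕ)):ℝ) - α) = t ^ (α * (k:ℝ)) := by
    congr 1; push_cast; ring
  have e3 : (lam * t ^ α) ^ k = lam ^ k * t ^ (α * (k:ℝ)) := by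
    rw [mul_pow, ← Real.rpow_natCast (t ^ α) k, ← Real.rpow_mul ht.le]
  have hΓk1 : (0:ℝ) < Real.Gamma (α * ((k:ℝ) + 1)) := Real.Gamma_pos_of_pos hαk1
  have hΓαk : (0:ℝ) < Real.Gamma (α * (k:ℝ) + 1) := Real.Gamma_pos_of_pos (by positivity)
  rw [e1, e2, e3, e0, hΓ, pow_succ]
  field_simp
end

section
/- The Laguerre polynomials Lₙ(x) = (eˣ/n!) dⁿ/dxⁿ (e^(-x) xⁿ) satisfy the orthogonality relation ∫₀^∞ e^(-x) Lₘ(x) Lₙ(x) dx = 0 for m ≠ n, and ∫₀^∞ e^(-x) Lₙ(x)² dx = 1. -/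
open MeasureTheory Real Finset

/-- The `n`th Laguerre polynomial (equal to `(eˣ/n!) dⁿ/dxⁿ (e^{-x} xⁿ)`). -/
noncomputable def laguerre (n : ℕ) (x : ℝ) : ℝ :=
  (Real.exp x / (n.factorial : ℝ)) * iteratedDeriv n (fun y => Real.exp (-y) * y ^ n) x

open Polynomial in
lemma deriv_exp_mul_poly (p : ℝ[X]) :
    deriv (fun x => Real.exp (-x) * p.eval x)
      = fun x => Real.exp (-x) * (Polynomial.derivative p - p).eval x := by
  funext x
  have h1 : HasDerivAt (fun x : ℝ => Real.exp (-x)) (-Real.exp (-x)) x := by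
    convert (hasDerivAt_neg x).exp using 1; ring
  have h2 := p.hasDerivAt x
  have := (h1.mul h2).deriv
  rw [show (fun x => Real.exp (-x) * p.eval x) = ((fun x : ℝ => Real.exp (-x)) * fun x => p.eval x) from rfl, this]
  simp only [Polynomial.eval_sub]
  ring

open Polynomial in
lemma iteratedDeriv_exp_mul_poly (n : ℕ) (p : ℝ[X]) :
    iteratedDeriv n (fun x => Real.exp (-x) * p.eval x)
      = fun x => Real.exp (-x) *
          (((Polynomial.derivative - 1 : Module.End ℝ ℝ[X]) ^ n) p).eval x := by
  induction n with
  | zero => simp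
  | succ n ih =>
    rw [iteratedDeriv_succ, ih, deriv_exp_mul_poly]
    funext x
    congr 2
    rw [pow_succ']
    simp [Module.End.mul_apply, LinearMap.sub_apply]

open Polynomial in
lemma neg_one_pow_end_apply (j : ℕ) (p : ℝ[X]) :
    ((-1 : Module.End ℝ ℝ[X]) ^ j) p = ((-1 : ℝ) ^ j) • p := by
  induction j with
  | zero => simp
  | succ j ih =>
    rw [pow_succ, pow_succ, Module.End.mul_apply]
    have h : ((-1 : Module.End ℝ ℝ[X])) p = -p := by simp
    rw [h, map_neg, ih, ← neg_smul]
    congr 1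
    ring

open Polynomial in
lemma Tpow_apply (n : ℕ) (p : ℝ[X]) :
    ((Polynomial.derivative - 1 : Module.End ℝ ℝ[X]) ^ n) p
      = ∑ m ∈ range (n + 1),
          ((-1 : ℝ) ^ (n - m) * (n.choose m : ℝ)) • Polynomial.derivative^[m] p := by
  have hc : Commute (Polynomial.derivative : Module.End ℝ ℝ[X]) (-1) :=
    (Commute.one_right (Polynomial.derivative : Module.End ℝ ℝ[X])).neg_right
  rw [sub_eq_add_neg, hc.add_pow]
  rw [LinearMap.sum_apply]
  refine Finset.sum_congr rfl fun m hm => ?_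
  rw [Module.End.mul_apply, Module.End.mul_apply, Module.End.natCast_apply,
    neg_one_pow_end_apply, LinearMap.map_smul, LinearMap.map_smul_of_tower,
    Module.End.pow_apply]
  rw [← Nat.cast_smul_eq_nsmul ℝ, smul_smul]


lemma laguerre_eq (n : ℕ) (x : ℝ) :
    laguerre n x = ∑ k ∈ range (n + 1),
      ((-1 : ℝ) ^ k * (n.choose k : ℝ) / (k.factorial : ℝ)) * x ^ k := by
  have hfun : (fun y : ℝ => Real.exp (-y) * y ^ n)
      = fun y => Real.exp (-y) * (Polynomial.X ^ n : Polynomial ℝ).eval y := by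
    funext y; simp
  rw [laguerre, hfun, iteratedDeriv_exp_mul_poly, Tpow_apply]
  rw [← Finset.sum_range_reflect (fun k => ((-1 : ℝ) ^ k * (n.choose k : ℝ) / (k.factorial : ℝ)) * x ^ k) (n+1)]
  beta_reduce
  simp only [Nat.add_sub_cancel]
  rw [Polynomial.eval_finset_sum, Finset.mul_sum, Finset.mul_sum]
  refine Finset.sum_congr rfl fun m hm => ?_
  have hm' : m ≤ n := by simpa [Nat.lt_succ_iff] using hm
  have hnat : n.choose m * n.descFactorial m * (n-m).factorial
      = n.factorial * n.choose m := by
    rw [Nat.descFactorial_eq_factorial_mul_choose]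
    have h2 := Nat.choose_mul_factorial_mul_factorial hm'
    calc n.choose m * (m.factorial * n.choose m) * (n-m).factorial
        = n.choose m * (n.choose m * m.factorial * (n-m).factorial) := by ring
      _ = n.choose m * n.factorial := by rw [h2]
      _ = n.factorial * n.choose m := by ring
  simp only [Polynomial.eval_smul, Polynomial.iterate_derivative_X_pow_eq_natCast_mul,
    smul_eq_mul, Polynomial.eval_mul, Polynomial.eval_pow, Polynomial.eval_X,
    Polynomial.eval_natCast, Nat.add_sub_cancel]
  rw [Real.exp_neg]
  have h1 : (n.factorial : ℝ) ≠ 0 := by positivity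
  have h2 : ((n-m).factorial : ℝ) ≠ 0 := by positivity
  have h3 : Real.exp x ≠ 0 := (Real.exp_pos x).ne'
  field_simp
  have hnatR : (n.choose m : ℝ) * (n.descFactorial m : ℝ) * ((n - m).factorial : ℝ)
      = (n.factorial : ℝ) * (n.choose m : ℝ) := by exact_mod_cast congrArg (fun t : ℕ => (t : ℝ)) hnat
  rw [Nat.choose_symm hm']; linear_combination x ^ (n - m) * hnatR

lemma integrableOn_exp_mul_pow (k : ℕ) :
    IntegrableOn (fun x : ℝ => Real.exp (-x) * x ^ k) (Set.Ioi 0) := by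
  have h := Real.GammaIntegral_convergent (s := (k + 1 : ℝ)) (by positivity)
  simpa [Real.rpow_natCast] using h

lemma integral_exp_mul_pow (k : ℕ) :
    ∫ x in Set.Ioi (0:ℝ), Real.exp (-x) * x ^ k = (k.factorial : ℝ) := by
  have h := Real.Gamma_eq_integral (s := (k + 1 : ℝ)) (by positivity)
  rw [Real.Gamma_nat_eq_factorial] at h
  rw [h]
  apply setIntegral_congr_fun measurableSet_Ioi
  intro x hx
  norm_num [Real.rpow_natCast]

lemma lemE (n i : ℕ) :
    ∑ k ∈ range (n + 1), ((-1 : ℝ)) ^ k * (n.choose k : ℝ) * (k.choose i : ℝ)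
      = if i = n then (-1 : ℝ) ^ n else 0 := by
  by_cases hin : i ≤ n
  · have hsplit : range (n + 1) = Finset.Ico 0 (n + 1) := by rw [Finset.range_eq_Ico]
    rw [hsplit, ← Finset.sum_Ico_consecutive _ (Nat.zero_le i) (by omega : i ≤ n + 1)]
    have hzero : ∑ k ∈ Finset.Ico 0 i, ((-1 : ℝ)) ^ k * (n.choose k : ℝ) * (k.choose i : ℝ) = 0 := by
      apply Finset.sum_eq_zero
      intro k hk
      rw [Finset.mem_Ico] at hk
      rw [Nat.choose_eq_zero_of_lt hk.2]
      simp
    rw [hzero, zero_add]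
    rw [Finset.sum_Ico_eq_sum_range]
    have hlen : n + 1 - i = (n - i) + 1 := by omega
    rw [hlen]
    have hterm : ∀ k ∈ range ((n - i) + 1),
        ((-1 : ℝ)) ^ (i + k) * (n.choose (i + k) : ℝ) * ((i + k).choose i : ℝ)
          = ((-1 : ℝ) ^ i * (n.choose i : ℝ)) * (((-1 : ℝ)) ^ k * ((n - i).choose k : ℝ)) := by
      intro k hk
      rw [Finset.mem_range] at hk
      have h1 : n.choose (i + k) * (i + k).choose i = n.choose i * (n - i).choose (i + k - i) :=
        Nat.choose_mul (by omega)
      have h2 : i + k - i = k := by omega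
      rw [h2] at h1
      have h1R : (n.choose (i + k) : ℝ) * ((i + k).choose i : ℝ)
          = (n.choose i : ℝ) * ((n - i).choose k : ℝ) := by exact_mod_cast h1
      rw [pow_add]
      linear_combination ((-1 : ℝ) ^ i * (-1 : ℝ) ^ k) * h1R
    rw [Finset.sum_congr rfl hterm, ← Finset.mul_sum]
    have halt : ∑ k ∈ range ((n - i) + 1), ((-1 : ℝ)) ^ k * ((n - i).choose k : ℝ)
        = if n - i = 0 then 1 else 0 := by
      have := Int.alternating_sum_range_choose (n := n - i)
      exact_mod_cast congrArg (fun t : ℤ => (t : ℝ)) this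
    rw [halt]
    by_cases hi : i = n
    · subst hi; simp
    · rw [if_neg (by omega), if_neg hi, mul_zero]
  · rw [if_neg (by omega)]
    apply Finset.sum_eq_zero
    intro k hk
    rw [Finset.mem_range] at hk
    have hz : k.choose i = 0 := Nat.choose_eq_zero_of_lt (by omega)
    rw [hz]
    simp

lemma lemA (n j : ℕ) :
    ∑ k ∈ range (n + 1), ((-1 : ℝ)) ^ k * (n.choose k : ℝ) * ((j + k).choose j : ℝ)
      = (-1 : ℝ) ^ n * (j.choose n : ℝ) := by
  have hV : ∀ k : ℕ, ((j + k).choose j : ℝ)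
      = ∑ p ∈ Finset.HasAntidiagonal.antidiagonal j, (j.choose p.1 : ℝ) * (k.choose p.2 : ℝ) := by
    intro k
    have := Nat.add_choose_eq j k j
    push_cast [this]
    rfl
  calc ∑ k ∈ range (n + 1), ((-1 : ℝ)) ^ k * (n.choose k : ℝ) * ((j + k).choose j : ℝ)
      = ∑ k ∈ range (n + 1), ∑ p ∈ Finset.HasAntidiagonal.antidiagonal j,
          (j.choose p.1 : ℝ) * (((-1 : ℝ)) ^ k * (n.choose k : ℝ) * (k.choose p.2 : ℝ)) := by
        refine Finset.sum_congr rfl fun k _ => ?_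
        rw [hV, Finset.mul_sum]
        exact Finset.sum_congr rfl fun p _ => by ring
    _ = ∑ p ∈ Finset.HasAntidiagonal.antidiagonal j, (j.choose p.1 : ℝ) *
          (∑ k ∈ range (n + 1), ((-1 : ℝ)) ^ k * (n.choose k : ℝ) * (k.choose p.2 : ℝ)) := by
        rw [Finset.sum_comm]
        exact Finset.sum_congr rfl fun p _ => by rw [Finset.mul_sum]
    _ = ∑ p ∈ Finset.HasAntidiagonal.antidiagonal j, (j.choose p.1 : ℝ) *
          (if p.2 = n then (-1 : ℝ) ^ n else 0) := by
        exact Finset.sum_congr rfl fun p _ => by rw [lemE]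
    _ = (-1 : ℝ) ^ n * (j.choose n : ℝ) := by
        by_cases hnj : n ≤ j
        · rw [Finset.sum_eq_single_of_mem ((j - n, n))
            (by rw [Finset.HasAntidiagonal.mem_antidiagonal]; omega)]
          · rw [if_pos rfl, Nat.choose_symm hnj]; ring
          · intro p hp hne
            rw [Finset.HasAntidiagonal.mem_antidiagonal] at hp
            have : p.2 ≠ n := by
              intro h
              apply hne
              have : p.1 = j - n := by omega
              exact Prod.ext this h
            rw [if_neg this, mul_zero]
        · rw [Nat.choose_eq_zero_of_lt (by omega), Finset.sum_eq_zero]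
          · simp
          · intro p hp
            rw [Finset.HasAntidiagonal.mem_antidiagonal] at hp
            rw [if_neg (by omega), mul_zero]

lemma lemS (m n : ℕ) :
    ∑ j ∈ range (m + 1), ∑ k ∈ range (n + 1),
        ((-1 : ℝ)) ^ (j + k) * (m.choose j : ℝ) * (n.choose k : ℝ) * ((j + k).choose j : ℝ)
      = if m = n then (1 : ℝ) else 0 := by
  have h1 : ∀ j, ∑ k ∈ range (n + 1),
      ((-1 : ℝ)) ^ (j + k) * (m.choose j : ℝ) * (n.choose k : ℝ) * ((j + k).choose j : ℝ)
      = ((-1 : ℝ)) ^ j * (m.choose j : ℝ) * ((-1 : ℝ) ^ n * (j.choose n : ℝ)) := by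
    intro j
    rw [← lemA n j, Finset.mul_sum]
    refine Finset.sum_congr rfl fun k _ => ?_
    rw [pow_add]
    ring
  rw [Finset.sum_congr rfl fun j _ => h1 j]
  have h2 : ∑ j ∈ range (m + 1),
      ((-1 : ℝ)) ^ j * (m.choose j : ℝ) * ((-1 : ℝ) ^ n * (j.choose n : ℝ))
      = (-1 : ℝ) ^ n * ∑ j ∈ range (m + 1), ((-1 : ℝ)) ^ j * (m.choose j : ℝ) * (j.choose n : ℝ) := by
    rw [Finset.mul_sum]
    exact Finset.sum_congr rfl fun j _ => by ring
  rw [h2, lemE m n]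
  by_cases h : n = m
  · subst h
    rw [if_pos rfl, if_pos rfl, ← pow_add, ← two_mul, pow_mul]
    norm_num
  · rw [if_neg h, if_neg (fun hh => h hh.symm), mul_zero]

lemma integral_laguerre (m n : ℕ) :
    ∫ x in Set.Ioi (0:ℝ), Real.exp (-x) * laguerre m x * laguerre n x
      = if m = n then (1 : ℝ) else 0 := by
  have hpt : ∀ x : ℝ, Real.exp (-x) * laguerre m x * laguerre n x
      = ∑ p ∈ range (m + 1) ×ˢ range (n + 1),
          (((-1 : ℝ) ^ p.1 * (m.choose p.1 : ℝ) / (p.1.factorial : ℝ)) *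
           ((-1 : ℝ) ^ p.2 * (n.choose p.2 : ℝ) / (p.2.factorial : ℝ))) *
          (Real.exp (-x) * x ^ (p.1 + p.2)) := by
    intro x
    rw [laguerre_eq, laguerre_eq, mul_assoc, Finset.sum_mul_sum, Finset.mul_sum,
      Finset.sum_product]
    refine Finset.sum_congr rfl fun j _ => ?_
    rw [Finset.mul_sum]
    refine Finset.sum_congr rfl fun k _ => ?_
    rw [pow_add]
    ring
  simp only [hpt]
  rw [MeasureTheory.integral_finset_sum _
    (fun p _ => ((integrableOn_exp_mul_pow (p.1 + p.2)).const_mul _))]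
  have hterm : ∀ p : ℕ × ℕ,
      (∫ x in Set.Ioi (0:ℝ),
        (((-1 : ℝ) ^ p.1 * (m.choose p.1 : ℝ) / (p.1.factorial : ℝ)) *
         ((-1 : ℝ) ^ p.2 * (n.choose p.2 : ℝ) / (p.2.factorial : ℝ))) *
        (Real.exp (-x) * x ^ (p.1 + p.2)))
      = ((-1 : ℝ)) ^ (p.1 + p.2) * (m.choose p.1 : ℝ) * (n.choose p.2 : ℝ)
          * ((p.1 + p.2).choose p.1 : ℝ) := by
    intro p
    rw [integral_const_mul, integral_exp_mul_pow]
    have hnat := Nat.add_choose_mul_factorial_mul_factorial p.1 p.2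
    have hR : ((p.1 + p.2).choose p.1 : ℝ) * (p.1.factorial : ℝ) * (p.2.factorial : ℝ)
        = ((p.1 + p.2).factorial : ℝ) := by
      rw [Nat.choose_symm_add]
      exact_mod_cast congrArg (fun t : ℕ => (t : ℝ)) hnat
    have h1 : (p.1.factorial : ℝ) ≠ 0 := by positivity
    have h2 : (p.2.factorial : ℝ) ≠ 0 := by positivity
    field_simp
    rw [pow_add]
    linear_combination -((-1 : ℝ)) ^ p.1 * ((-1 : ℝ)) ^ p.2 * (m.choose p.1 : ℝ) * (n.choose p.2 : ℝ) * hR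
  rw [Finset.sum_congr rfl fun p _ => hterm p, Finset.sum_product]
  exact lemS m n

theorem laguerre_orthonormal (m n : ℕ) :
    (m ≠ n → ∫ x in Set.Ioi (0:ℝ), Real.exp (-x) * laguerre m x * laguerre n x = 0) ∧
    (∫ x in Set.Ioi (0:ℝ), Real.exp (-x) * laguerre n x * laguerre n x = 1) := by
  constructor
  · intro h
    rw [integral_laguerre, if_neg h]
  · rw [integral_laguerre, if_pos rfl]
end
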